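/- The reduction axiom for announcements and knowing whether is valid: ⟨ψ⟩Δφ ↔ (ψ ∧ (Δ[ψ]φ ∨ Δ[ψ]¬φ)) holds at every world of every Kripke model, where [ψ]χ abbreviates ψ→⟨ψ⟩χ and ⟨ψ⟩χ means ψ holds and χ holds after restricting the model to ψ-worlds. -/
import Mathlib


/-- Formulas of public announcement logic with knowing whether:
atoms, ¬, ∧, Δ, and the announcement diamond ⟨ψ⟩χ. -/
inductive PForm where
  | atom : ℕ → PForm
  | neg : PForm → PForm
  | conj : PForm → PForm → PForm
  | delta : PForm → PForm
  | ann : PForm → PForm → PForm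

/-- Satisfaction; announcing ψ restricts the accessibility relation to ψ-worlds. -/
def pSat {S : Type*} (V : ℕ → S → Prop) : (S → S → Prop) → PForm → S → Prop
  | _, .atom n, s => V n s
  | R, .neg φ, s => ¬ pSat V R φ s
  | R, .conj φ ψ, s => pSat V R φ s ∧ pSat V R ψ s
  | R, .delta φ, s =>
      (∀ t, R s t → pSat V R φ t) ∨ (∀ t, R s t → ¬ pSat V R φ t)
  | R, .ann ψ χ, s =>
      pSat V R ψ s ∧
      pSat V (fun a b => R a b ∧ pSat V R ψ a ∧ pSat V R ψ b) χ s

/-- The abbreviation [ψ]χ := ψ → ⟨ψ⟩χ, as a formula (using ¬,∧). -/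
def pbox (ψ χ : PForm) : PForm := .neg (.conj ψ (.neg (.ann ψ χ)))

/-- Reduction axiom: ⟨ψ⟩Δφ ↔ (ψ ∧ (Δ[ψ]φ ∨ Δ[ψ]¬φ)) is valid. -/
theorem ann_delta_reduction {S : Type*} (V : ℕ → S → Prop) (R : S → S → Prop)
    (ψ φ : PForm) (s : S) :
    pSat V R (.ann ψ (.delta φ)) s ↔
      (pSat V R ψ s ∧
        (pSat V R (.delta (pbox ψ φ)) s ∨ pSat V R (.delta (pbox ψ (.neg φ))) s)) := by
  simp only [pSat, pbox, not_and, not_not]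
  constructor
  · rintro ⟨hψ, h | h⟩
    · exact ⟨hψ, .inl (.inl fun t ht hpt hc => hc hpt (h t ⟨ht, hψ, hpt⟩))⟩
    · exact ⟨hψ, .inr (.inl fun t ht hpt hc => h t ⟨ht, hψ, hpt⟩ (hc hpt))⟩
  · rintro ⟨hψ, (h | h) | (h | h)⟩
    · refine ⟨hψ, .inl fun t ⟨ht, _, hpt⟩ => ?_⟩
      by_contra hq
      exact h t ht hpt fun _ => hq
    · refine ⟨hψ, .inr fun t ⟨ht, _, hpt⟩ hq => ?_⟩
      exact h t ht fun _ hc => hc hpt hq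
    · refine ⟨hψ, .inr fun t ⟨ht, _, hpt⟩ hq => ?_⟩
      exact h t ht hpt fun _ => hq
    · refine ⟨hψ, .inl fun t ⟨ht, _, hpt⟩ => ?_⟩
      by_contra hq
      exact h t ht fun _ hc => hq (hc hpt)
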